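/- Let V be a vector space over a field K with linearly independent vectors v₁, v₂, v₃, v₄, and let W = Λ²V / ⟨v₁∧v₂ − v₃∧v₄⟩ with β : V × V → W the composition of ∧ with the quotient map. Then for any two linearly independent vectors v, v' in the span of {v₁,v₂,v₃,v₄}, β(v, v') ≠ 0. -/

import Mathlib

open ExteriorAlgebra

section Aux

variable {K V : Type*} [Field K] [AddCommGroup V] [Module K V]

/-- The alternating bilinear form from two linear functionals. -/
def wedgeForm (f g : V →ₗ[K] K) : V [⋀^Fin 2]→ₗ[K] K where
  toFun w := f (w 0) * g (w 1) - g (w 0) * f (w 1)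
  map_update_add' w i x y := by
    fin_cases i <;> simp [Function.update] <;> ring
  map_update_smul' w i c x := by
    fin_cases i <;> simp [Function.update] <;> ring
  map_eq_zero_of_eq' w i j hij hne := by
    fin_cases i <;> fin_cases j <;> simp_all <;> ring

theorem wedgeForm_apply (f g : V →ₗ[K] K) (a b : V) :
    wedgeForm f g ![a, b] = f a * g b - g a * f b := rfl

/-- The degree-two part functional. -/
noncomputable def degTwo (f : V [⋀^Fin 2]→ₗ[K] K) : ExteriorAlgebra K V →ₗ[K] K :=
  liftAlternating (fun n => match n with | 2 => f | _ => 0)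

theorem degTwo_mul (f : V [⋀^Fin 2]→ₗ[K] K) (a b : V) :
    degTwo f (ι K a * ι K b) = f ![a, b] := by
  have : ι K a * ι K b = ιMulti K 2 ![a, b] := by
    simp [ιMulti_apply, List.ofFn_succ]
  rw [this, degTwo, liftAlternating_apply_ιMulti]
  rfl

/-- Dual family for four independent vectors. -/
theorem dualFam (w : Fin 4 → V) (hv : LinearIndependent K w) : ∃ φ : Fin 4 → V →ₗ[K] K,
    ∀ i j, φ i (w j) = if i = j then 1 else 0 := by
  have hinj := hv.injective
  have hsub := (linearIndepOn_id_range_iff hinj).mpr hv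
  have hmem : ∀ i, w i ∈ hsub.extend (Set.subset_univ _) :=
    fun i => hsub.subset_extend _ (Set.mem_range_self i)
  refine ⟨fun i => (Module.Basis.extend hsub).coord ⟨w i, hmem i⟩, fun i j => ?_⟩
  have hw : w j = Module.Basis.extend hsub ⟨w j, hmem j⟩ :=
    (Module.Basis.extend_apply_self hsub ⟨w j, hmem j⟩).symm
  classical
  rw [hw, Module.Basis.coord_apply, Module.Basis.repr_self, Finsupp.single_apply]
  simp [Subtype.ext_iff, hinj.eq_iff, eq_comm]

end Aux

/-- Let `v₁,…,v₄ ∈ V` be linearly independent and let `W = Λ²V / ⟨v₁∧v₂ − v₃∧v₄⟩`, with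
`β` induced by the wedge product. Then `β(v,v') ≠ 0` for any two linearly independent
vectors `v, v'` in the span of `{v₁,v₂,v₃,v₄}`. -/
theorem quotient_wedge_nonzero_on_independent_pairs (K V : Type*) [Field K]
    [AddCommGroup V] [Module K V] (v₁ v₂ v₃ v₄ : V)
    (hv : LinearIndependent K ![v₁, v₂, v₃, v₄]) :
    ∀ v v' : V, v ∈ Submodule.span K {v₁, v₂, v₃, v₄} →
      v' ∈ Submodule.span K {v₁, v₂, v₃, v₄} →
      LinearIndependent K ![v, v'] →
      (Submodule.span K {ι K v₁ * ι K v₂ - ι K v₃ * ι K v₄} :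
          Submodule K (ExteriorAlgebra K V)).mkQ (ι K v * ι K v') ≠ 0 := by
  intro v v' hmv hmv' hind hcon
  set w : Fin 4 → V := ![v₁, v₂, v₃, v₄] with hwdef
  rw [Submodule.mkQ_apply, Submodule.Quotient.mk_eq_zero] at hcon
  obtain ⟨c, hc⟩ := Submodule.mem_span_singleton.1 hcon
  have hset : ({v₁, v₂, v₃, v₄} : Set V) = Set.range w := by
    simp only [hwdef, Matrix.range_cons, Matrix.range_empty, Set.union_empty]
    ext x; simp [or_comm, or_left_comm, or_assoc]
  rw [hset] at hmv hmv'
  obtain ⟨a, ha⟩ := (Submodule.mem_span_range_iff_exists_fun K).1 hmv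
  obtain ⟨b, hb⟩ := (Submodule.mem_span_range_iff_exists_fun K).1 hmv'
  obtain ⟨φ, hφ⟩ := dualFam w hv
  have hA : ∀ i, φ i v = a i := by
    intro i
    rw [← ha]
    simp [hφ, Finset.sum_ite_eq, eq_comm]
  have hB : ∀ i, φ i v' = b i := by
    intro i
    rw [← hb]
    simp [hφ, Finset.sum_ite_eq, eq_comm]
  have hφ1 : ∀ k, φ k v₁ = if k = 0 then 1 else 0 := fun k => by simpa [hwdef] using hφ k 0
  have hφ2 : ∀ k, φ k v₂ = if k = 1 then 1 else 0 := fun k => by simpa [hwdef] using hφ k 1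
  have hφ3 : ∀ k, φ k v₃ = if k = 2 then 1 else 0 := fun k => by simpa [hwdef] using hφ k 2
  have hφ4 : ∀ k, φ k v₄ = if k = 3 then 1 else 0 := fun k => by simpa [hwdef] using hφ k 3
  have E : ∀ k l : Fin 4,
      c * (((if k = 0 then (1:K) else 0) * (if l = 1 then 1 else 0)
          - (if l = 0 then (1:K) else 0) * (if k = 1 then 1 else 0))
        - ((if k = 2 then (1:K) else 0) * (if l = 3 then 1 else 0)
          - (if l = 2 then (1:K) else 0) * (if k = 3 then 1 else 0)))
      = a k * b l - a l * b k := by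
    intro k l
    have h := congrArg (degTwo (wedgeForm (φ k) (φ l))) hc
    simp only [map_smul, map_sub, degTwo_mul, wedgeForm_apply, smul_eq_mul,
      hφ1, hφ2, hφ3, hφ4, hA, hB] at h
    exact h
  have e01 := E 0 1
  have e23 := E 2 3
  have e02 := E 0 2
  have e03 := E 0 3
  have e12 := E 1 2
  have e13 := E 1 3
  simp only [Fin.reduceEq, if_true, if_false, ite_true, ite_false] at e01 e23 e02 e03 e12 e13
  norm_num at e01 e23 e02 e03 e12 e13
  have q01 : a 0 * b 1 - a 1 * b 0 = c := by linear_combination -e01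
  have q23 : a 2 * b 3 - a 3 * b 2 = -c := by linear_combination -e23
  have q02 : a 0 * b 2 - a 2 * b 0 = 0 := by linear_combination -e02
  have q03 : a 0 * b 3 - a 3 * b 0 = 0 := by linear_combination -e03
  have q12 : a 1 * b 2 - a 2 * b 1 = 0 := by linear_combination -e12
  have q13 : a 1 * b 3 - a 3 * b 1 = 0 := by linear_combination -e13
  -- Pluecker relation forces c = 0
  have h2 : c * c = 0 := by
    linear_combination (-c) * q01 + (a 0 * b 1 - a 1 * b 0) * q23
      + (-(a 1 * b 3 - a 3 * b 1)) * q02 + (a 1 * b 2 - a 2 * b 1) * q03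
  have hc0 : c = 0 := mul_self_eq_zero.1 h2
  rw [hc0] at q01 q23
  -- now all 2x2 minors vanish
  have hp : ∀ k l : Fin 4, a k * b l - a l * b k = 0 := by
    intro k l
    have q01' : a 0 * b 1 - a 1 * b 0 = 0 := by linear_combination q01
    have q23' : a 2 * b 3 - a 3 * b 2 = 0 := by linear_combination q23
    fin_cases k <;> fin_cases l <;>
      simp only [Fin.zero_eta, Fin.mk_one, Fin.reduceFinMk] <;>
      first
        | (linear_combination q01')
        | (linear_combination (-1 : K) * q01')
        | (linear_combination q23')
        | (linear_combination (-1 : K) * q23')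
        | (linear_combination q02)
        | (linear_combination (-1 : K) * q02)
        | (linear_combination q03)
        | (linear_combination (-1 : K) * q03)
        | (linear_combination q12)
        | (linear_combination (-1 : K) * q12)
        | (linear_combination q13)
        | (linear_combination (-1 : K) * q13)
        | ring1
  -- v ≠ 0, so some coordinate of v is nonzero
  have hvne : v ≠ 0 := by
    have := hind.ne_zero 0
    simpa using this
  have hex : ∃ k, a k ≠ 0 := by
    by_contra h
    push_neg at h
    apply hvne
    rw [← ha]
    simp [h]
  obtain ⟨k, hk⟩ := hex
  have hz : b k • v - a k • v' = 0 := by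
    rw [← ha, ← hb, Finset.smul_sum, Finset.smul_sum, ← Finset.sum_sub_distrib]
    refine Finset.sum_eq_zero fun i _ => ?_
    rw [smul_smul, smul_smul, ← sub_smul]
    have h0 : b k * a i - a k * b i = 0 := by linear_combination (-1 : K) * hp k i
    rw [h0, zero_smul]
  have := Fintype.linearIndependent_iff.1 hind ![b k, -(a k)] ?_ 1
  · simp at this
    exact hk this
  · simpa [Fin.sum_univ_two, sub_eq_add_neg] using hz
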